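/- Let H be a hypergraph and let r_1, r_2 be positive integers with r_1·r_2 < Δ(H). Then r_2·ms_{r_1}(H) ≤ ms_{r_1·r_2}(H) and r_2·cms_{r_1}(H) ≤ cms_{r_1·r_2}(H). -/

import Mathlib

/-- A hypergraph: a finite vertex type, a finite edge (label) type and an incidence
relation; distinct (parallel) edges may be incident with the same vertices. -/
structure OrdHypergraph where
  V : Type
  E : Type
  fintV : Fintype V
  fintE : Fintype E
  inc : E → V → Bool

namespace OrdHypergraph

/-- The number ε of edges of `H`. -/
def edgeCard (H : OrdHypergraph) : ℕ :=
  letI := H.fintE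
  Fintype.card H.E

/-- The degree of a vertex: the number of edges incident with it. -/
def degree (H : OrdHypergraph) (v : H.V) : ℕ :=
  letI := H.fintE
  (Finset.univ.filter (fun e => H.inc e v = true)).card

/-- The maximum degree Δ(H). -/
def maxDegree (H : OrdHypergraph) : ℕ :=
  letI := H.fintV
  Finset.univ.sup H.degree

/-- An ordering (labelling) of `H`, encoded by its ε-periodic enumeration:
`f i` is the edge whose label is `i % ε`; on `[ε]`, `f` is a bijection onto the
edge set. -/
structure IsOrdering (H : OrdHypergraph) (f : ℕ → H.E) : Prop where
  periodic : ∀ i, f (i + H.edgeCard) = f i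
  inj : ∀ i j, i < H.edgeCard → j < H.edgeCard → f i = f j → i = j
  surj : ∀ e : H.E, ∃ i, i < H.edgeCard ∧ f i = e

/-- The degree of `v` in the hypergraph `H(S)` formed (with multiplicity) by the
sequence `S` of `s` (cyclically) consecutive edges with labels `j, …, j+s-1`
taken modulo ε. -/
def windowDeg (H : OrdHypergraph) (f : ℕ → H.E) (j s : ℕ) (v : H.V) : ℕ :=
  ((Finset.range s).filter (fun i => H.inc (f (j + i)) v = true)).card

/-- Every sequence of `s` consecutive edges of the ordering `f` forms a hypergraph of
maximum degree at most `r`.  A window of `s` consecutive edges starts at a label `j`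
with `j + s ≤ (a+1)·ε`, where `a·ε ≤ s < (a+1)·ε` (i.e. `a = s / ε`). -/
def msOK (H : OrdHypergraph) (f : ℕ → H.E) (r s : ℕ) : Prop :=
  ∀ j v, j + s ≤ (s / H.edgeCard + 1) * H.edgeCard → H.windowDeg f j s v ≤ r

/-- Every sequence of `s` cyclically consecutive edges of the ordering `f` forms a
hypergraph of maximum degree at most `r`. -/
def cmsOK (H : OrdHypergraph) (f : ℕ → H.E) (r s : ℕ) : Prop :=
  ∀ j v, H.windowDeg f j s v ≤ r

/-- ms_r(ℓ): the largest `s` such that every `s` consecutive edges of `ℓ` form a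
hypergraph of maximum degree at most `r`. -/
noncomputable def msrOf (H : OrdHypergraph) (f : ℕ → H.E) (r : ℕ) : ℕ :=
  sSup {s | H.msOK f r s}

/-- cms_r(ℓ). -/
noncomputable def cmsrOf (H : OrdHypergraph) (f : ℕ → H.E) (r : ℕ) : ℕ :=
  sSup {s | H.cmsOK f r s}

/-- ms_r(H): the maximum of ms_r(ℓ) over all orderings ℓ of H. -/
noncomputable def msr (H : OrdHypergraph) (r : ℕ) : ℕ :=
  sSup {s | ∃ f, H.IsOrdering f ∧ H.msOK f r s}

/-- cms_r(H): the maximum of cms_r(ℓ) over all orderings ℓ of H. -/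
noncomputable def cmsr (H : OrdHypergraph) (r : ℕ) : ℕ :=
  sSup {s | ∃ f, H.IsOrdering f ∧ H.cmsOK f r s}

end OrdHypergraph

namespace OrdHypergraph

variable {H : OrdHypergraph} {f : ℕ → H.E}

theorem windowDeg_add' (j s t : ℕ) (v : H.V) :
    H.windowDeg f j (s + t) v = H.windowDeg f j s v + H.windowDeg f (j + s) t v := by
  classical
  simp only [windowDeg, Finset.card_filter]
  rw [Finset.sum_range_add]
  congr 1
  refine Finset.sum_congr rfl fun i _ => ?_
  rw [add_assoc]

theorem windowDeg_mono' (j : ℕ) {s t : ℕ} (hst : s ≤ t) (v : H.V) :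
    H.windowDeg f j s v ≤ H.windowDeg f j t v :=
  Finset.card_le_card (Finset.filter_subset_filter _ (Finset.range_subset_range.mpr hst))

theorem IsOrdering.f_mod (hf : H.IsOrdering f) (i : ℕ) :
    f i = f (i % H.edgeCard) := by
  have hp : Function.Periodic f H.edgeCard := hf.periodic
  exact (hp.map_mod_nat i).symm

theorem IsOrdering.windowDeg_edgeCard (hf : H.IsOrdering f) (hε : 0 < H.edgeCard)
    (j : ℕ) (v : H.V) :
    H.windowDeg f j H.edgeCard v = H.degree v := by
  classical
  letI := H.fintE
  have hginj : Function.Injective (fun i : Fin H.edgeCard => f (j + (i : ℕ))) := by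
    intro i1 i2 hEq
    simp only at hEq
    have h1 : f (j + (i1 : ℕ)) = f ((j + (i1 : ℕ)) % H.edgeCard) := hf.f_mod _
    have h2 : f (j + (i2 : ℕ)) = f ((j + (i2 : ℕ)) % H.edgeCard) := hf.f_mod _
    have hmods : (j + (i1 : ℕ)) % H.edgeCard = (j + (i2 : ℕ)) % H.edgeCard :=
      hf.inj _ _ (Nat.mod_lt _ hε) (Nat.mod_lt _ hε) (by rw [← h1, ← h2]; exact hEq)
    have hmm : (i1 : ℕ) ≡ (i2 : ℕ) [MOD H.edgeCard] :=
      Nat.ModEq.add_left_cancel' j hmods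
    have : (i1 : ℕ) % H.edgeCard = (i2 : ℕ) % H.edgeCard := hmm
    rw [Nat.mod_eq_of_lt i1.isLt, Nat.mod_eq_of_lt i2.isLt] at this
    exact Fin.ext this
  have hgbij : Function.Bijective (fun i : Fin H.edgeCard => f (j + (i : ℕ))) := by
    rw [Fintype.bijective_iff_injective_and_card]
    exact ⟨hginj, by convert Fintype.card_fin _ <;> rfl⟩
  unfold windowDeg degree
  rw [Finset.card_filter, Finset.card_filter]
  rw [← Fin.sum_univ_eq_sum_range (fun i => if H.inc (f (j + i)) v = true then 1 else 0)
    H.edgeCard]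
  exact Fintype.sum_bijective _ hgbij _ _ (fun i => rfl)

theorem lt_edgeCard_of_windowDeg_le (hf : H.IsOrdering f) (hε : 0 < H.edgeCard)
    {v : H.V} {r s : ℕ} (hd : r < H.degree v) (hw : H.windowDeg f 0 s v ≤ r) :
    s < H.edgeCard := by
  by_contra hs
  push_neg at hs
  have hmono := windowDeg_mono' (f := f) 0 hs v
  rw [hf.windowDeg_edgeCard hε] at hmono
  omega

theorem windowDeg_mul_le {r s : ℕ} (n j : ℕ) (v : H.V)
    (hb : ∀ k < n, H.windowDeg f (j + k * s) s v ≤ r) :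
    H.windowDeg f j (n * s) v ≤ n * r := by
  induction n with
  | zero => simp [windowDeg]
  | succ m ih =>
    rw [Nat.succ_mul, windowDeg_add', Nat.succ_mul]
    exact Nat.add_le_add (ih fun k hk => hb k (hk.trans (Nat.lt_succ_self m)))
      (hb m (Nat.lt_succ_self m))

theorem degree_le_of_msOK (hf : H.IsOrdering f) (hε : 0 < H.edgeCard) {r s : ℕ}
    (hs : 0 < s) (hsε : s < H.edgeCard) (hms : H.msOK f r s) {v : H.V} {n : ℕ}
    (hcov : H.edgeCard ≤ n * s) : H.degree v ≤ n * r := by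
  classical
  have hQ : H.degree v
      = ((Finset.range H.edgeCard).filter (fun i => H.inc (f i) v = true)).card := by
    have h0 := hf.windowDeg_edgeCard hε 0 v
    simp only [windowDeg, zero_add] at h0
    exact h0.symm
  set u : ℕ → ℕ := fun k => min (k * s) (H.edgeCard - s) with hu
  have hsub : Finset.range H.edgeCard ⊆ (Finset.range n).biUnion
      (fun k => (Finset.range s).image (fun i => u k + i)) := by
    intro i hi
    rw [Finset.mem_range] at hi
    rw [Finset.mem_biUnion]
    refine ⟨i / s, Finset.mem_range.mpr ((Nat.div_lt_iff_lt_mul hs).mpr (lt_of_lt_of_le hi hcov)),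
      ?_⟩
    have h1 : u (i / s) ≤ i := le_trans (min_le_left _ _) (Nat.div_mul_le_self i s)
    have h2 : i < u (i / s) + s := by
      rcases min_cases ((i / s) * s) (H.edgeCard - s) with ⟨hm, _⟩ | ⟨hm, _⟩
      · have hdm : i / s * s + i % s = i := Nat.div_add_mod' i s
        have hms2 : i % s < s := Nat.mod_lt _ hs
        simp only [hu, hm]
        omega
      · simp only [hu, hm]
        omega
    exact Finset.mem_image.mpr ⟨i - u (i / s), Finset.mem_range.mpr (by omega), by omega⟩
  have hstep : ∀ k, (((Finset.range s).image (fun i => u k + i)).filter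
      (fun i => H.inc (f i) v = true)).card ≤ r := by
    intro k
    have hinj : Function.Injective (fun i => u k + i) := fun a b hab => by
      simpa using hab
    rw [Finset.filter_image, Finset.card_image_of_injective _ hinj]
    have : ((Finset.range s).filter (fun i => H.inc (f (u k + i)) v = true)).card
        = H.windowDeg f (u k) s v := rfl
    rw [this]
    apply hms
    have hq : s / H.edgeCard = 0 := Nat.div_eq_of_lt hsε
    rw [hq, zero_add, one_mul]
    have := min_le_right (k * s) (H.edgeCard - s)
    simp only [hu]
    omega
  calc H.degree v
      = ((Finset.range H.edgeCard).filter (fun i => H.inc (f i) v = true)).card := hQ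
    _ ≤ (((Finset.range n).biUnion
          (fun k => (Finset.range s).image (fun i => u k + i))).filter
          (fun i => H.inc (f i) v = true)).card :=
        Finset.card_le_card (Finset.filter_subset_filter _ hsub)
    _ = ((Finset.range n).biUnion (fun k => ((Finset.range s).image
          (fun i => u k + i)).filter (fun i => H.inc (f i) v = true))).card := by
        rw [Finset.filter_biUnion]
    _ ≤ ∑ k ∈ Finset.range n, (((Finset.range s).image (fun i => u k + i)).filter
          (fun i => H.inc (f i) v = true)).card := Finset.card_biUnion_le
    _ ≤ ∑ _k ∈ Finset.range n, r := Finset.sum_le_sum fun k _ => hstep k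
    _ = n * r := by rw [Finset.sum_const, Finset.card_range, smul_eq_mul]

end OrdHypergraph

/-- Lemma: `r₂·ms_{r₁}(H) ≤ ms_{r₁r₂}(H)` and `r₂·cms_{r₁}(H) ≤ cms_{r₁r₂}(H)`. -/
theorem ms_cms_mul_le (H : OrdHypergraph) (r1 r2 : ℕ) (hr1 : 1 ≤ r1) (hr2 : 1 ≤ r2)
    (h : r1 * r2 < H.maxDegree) :
    r2 * H.msr r1 ≤ H.msr (r1 * r2) ∧ r2 * H.cmsr r1 ≤ H.cmsr (r1 * r2) := by
  classical
  letI := H.fintV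
  letI := H.fintE
  -- find a vertex of maximum degree
  have hne : (Finset.univ : Finset H.V).Nonempty := by
    by_contra hcon
    rw [Finset.not_nonempty_iff_eq_empty] at hcon
    have h0 : H.maxDegree = 0 := by
      unfold OrdHypergraph.maxDegree
      rw [hcon, Finset.sup_empty]
      rfl
    omega
  obtain ⟨v, -, hv⟩ := Finset.exists_mem_eq_sup Finset.univ hne H.degree
  have hd : r1 * r2 < H.degree v := hv ▸ h
  have hε : 0 < H.edgeCard := by
    have hle : H.degree v ≤ H.edgeCard := by
      unfold OrdHypergraph.degree OrdHypergraph.edgeCard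
      exact le_trans (Finset.card_filter_le _ _) (le_of_eq Finset.card_univ)
    have : 0 < r1 * r2 := Nat.mul_pos hr1 hr2
    omega
  have hr1d : r1 < H.degree v := by
    have : r1 ≤ r1 * r2 := Nat.le_mul_of_pos_right r1 hr2
    omega
  constructor
  · -- ms part
    show r2 * sSup {s | ∃ f, H.IsOrdering f ∧ H.msOK f r1 s}
        ≤ sSup {s | ∃ f, H.IsOrdering f ∧ H.msOK f (r1 * r2) s}
    set A := {s | ∃ f, H.IsOrdering f ∧ H.msOK f r1 s} with hA
    set B := {s | ∃ f, H.IsOrdering f ∧ H.msOK f (r1 * r2) s} with hB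
    have hj0 : ∀ s : ℕ, 0 + s ≤ (s / H.edgeCard + 1) * H.edgeCard := by
      intro s
      rw [zero_add, add_mul, one_mul]
      have h1 := Nat.div_add_mod' s H.edgeCard
      have h2 : s % H.edgeCard < H.edgeCard := Nat.mod_lt _ hε
      omega
    have hAbd : ∀ s ∈ A, s < H.edgeCard := by
      rintro s ⟨f, hf, hms⟩
      exact OrdHypergraph.lt_edgeCard_of_windowDeg_le hf hε hr1d (hms 0 v (hj0 s))
    have hBbd : ∀ s ∈ B, s < H.edgeCard := by
      rintro s ⟨f, hf, hms⟩
      exact OrdHypergraph.lt_edgeCard_of_windowDeg_le hf hε hd (hms 0 v (hj0 s))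
    have hBddA : BddAbove A := ⟨H.edgeCard, fun s hs => (hAbd s hs).le⟩
    have hBddB : BddAbove B := ⟨H.edgeCard, fun s hs => (hBbd s hs).le⟩
    rcases Nat.eq_zero_or_pos (sSup A) with h0 | hpos
    · rw [h0, Nat.mul_zero]
      exact Nat.zero_le _
    · have hAne : A.Nonempty := by
        by_contra hcon
        rw [Set.not_nonempty_iff_eq_empty] at hcon
        rw [hcon] at hpos
        simp at hpos
      obtain ⟨f, hf, hms⟩ := Nat.sSup_mem hAne hBddA
      set s := sSup A with hs
      have hs1 : 0 < s := hpos
      have hsε : s < H.edgeCard := hAbd s ⟨f, hf, hms⟩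
      -- key: r2 * s < ε
      have hrs : r2 * s < H.edgeCard := by
        by_contra hcon
        push_neg at hcon
        have hbig : H.degree v ≤ r2 * r1 :=
          OrdHypergraph.degree_le_of_msOK hf hε hs1 hsε hms hcon
        rw [mul_comm] at hbig
        omega
      have hmem : r2 * s ∈ B := by
        refine ⟨f, hf, ?_⟩
        intro j w hj
        have hq : r2 * s / H.edgeCard = 0 := Nat.div_eq_of_lt hrs
        rw [hq, zero_add, one_mul] at hj
        rw [mul_comm r1 r2]
        apply OrdHypergraph.windowDeg_mul_le r2 j w
        intro k hk
        apply hms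
        have hqs : s / H.edgeCard = 0 := Nat.div_eq_of_lt hsε
        rw [hqs, zero_add, one_mul]
        have h1 : k * s + s = (k + 1) * s := by ring
        have h2 : (k + 1) * s ≤ r2 * s := Nat.mul_le_mul_right s hk
        omega
      exact le_csSup hBddB hmem
  · -- cms part
    show r2 * sSup {s | ∃ f, H.IsOrdering f ∧ H.cmsOK f r1 s}
        ≤ sSup {s | ∃ f, H.IsOrdering f ∧ H.cmsOK f (r1 * r2) s}
    set A := {s | ∃ f, H.IsOrdering f ∧ H.cmsOK f r1 s} with hA
    set B := {s | ∃ f, H.IsOrdering f ∧ H.cmsOK f (r1 * r2) s} with hB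
    have hAbd : ∀ s ∈ A, s < H.edgeCard := by
      rintro s ⟨f, hf, hms⟩
      exact OrdHypergraph.lt_edgeCard_of_windowDeg_le hf hε hr1d (hms 0 v)
    have hBbd : ∀ s ∈ B, s < H.edgeCard := by
      rintro s ⟨f, hf, hms⟩
      exact OrdHypergraph.lt_edgeCard_of_windowDeg_le hf hε hd (hms 0 v)
    have hBddA : BddAbove A := ⟨H.edgeCard, fun s hs => (hAbd s hs).le⟩
    have hBddB : BddAbove B := ⟨H.edgeCard, fun s hs => (hBbd s hs).le⟩
    rcases Nat.eq_zero_or_pos (sSup A) with h0 | hpos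
    · rw [h0, Nat.mul_zero]
      exact Nat.zero_le _
    · have hAne : A.Nonempty := by
        by_contra hcon
        rw [Set.not_nonempty_iff_eq_empty] at hcon
        rw [hcon] at hpos
        simp at hpos
      obtain ⟨f, hf, hms⟩ := Nat.sSup_mem hAne hBddA
      have hmem : r2 * sSup A ∈ B := by
        refine ⟨f, hf, ?_⟩
        intro j w
        rw [mul_comm r1 r2]
        exact OrdHypergraph.windowDeg_mul_le r2 j w (fun k _ => hms _ w)
      exact le_csSup hBddB hmem
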